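/- For A ∈ Π_λ and the associated plane-filling GT-pattern s_{i,j}(A), one has s_{i,j}(A) = s_{i-1,j+1}(A) if and only if A_{in+j(n-1)} = 0, and s_{i,j}(A) = s_{i-1,j}(A) if and only if A_{in+(j-1)(n-1)} + ... + A_{in+j(n-1)} = k. -/

import Mathlib

open scoped BigOperators

/-- The reference sequence `T^m`: `T^m_i = 0` for `i > mn` and `T^m_i = a_i` otherwise
(where `a` is `n`-periodic, so `a i = a_{i mod n}`). -/
def Tseq (n : ℕ) (a : ℤ → ℤ) (m : ℤ) (i : ℤ) : ℤ :=
  if (m * n : ℤ) < i then 0 else a i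

/-- Membership in the set `Π_λ`: integer sequences eventually `0` to the right,
eventually equal to the periodic sequence `a` to the left, nonnegative, and with
every sum of `n` consecutive terms at most `k = a_0 + ... + a_{n-1}`. -/
structure MemPi (n : ℕ) (a : ℤ → ℤ) (A : ℤ → ℤ) : Prop where
  eventually_zero : ∃ N : ℤ, ∀ i, N ≤ i → A i = 0
  eventually_periodic : ∃ N : ℤ, ∀ i, i ≤ N → A i = a i
  nonneg : ∀ i, 0 ≤ A i
  window : ∀ i : ℤ,
    (∑ l ∈ Finset.Icc (i - n + 1) i, A l) ≤ ∑ l ∈ Finset.Icc (0 : ℤ) ((n : ℤ) - 1), a l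

/-- The array `s_{i,j}(A)` associated with a sequence `A`:
`s_{i,j}(A) = Σ_{l ≤ in+j(n-1)} (A_l - T^{i+j}_l) - Σ_{l=in+j(n-1)+1}^{(i+j)n} T^{i+j}_l`. -/
noncomputable def sPat (n : ℕ) (a A : ℤ → ℤ) (i j : ℤ) : ℤ :=
  (∑ᶠ l : ℤ, if l ≤ i * n + j * ((n : ℤ) - 1) then A l - Tseq n a (i + j) l else 0)
    - ∑ l ∈ Finset.Icc (i * n + j * ((n : ℤ) - 1) + 1) ((i + j) * n), Tseq n a (i + j) l

lemma Icc_succ_left' (a b : ℤ) : Finset.Icc (a+1) b = Finset.Ioc a b := by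
  ext x; simp

lemma sum_Ioc_split (f : ℤ → ℤ) {a b c : ℤ} (h1 : a ≤ b) (h2 : b ≤ c) :
    ∑ l ∈ Finset.Ioc a b, f l + ∑ l ∈ Finset.Ioc b c, f l = ∑ l ∈ Finset.Ioc a c, f l := by
  rw [← Finset.sum_union (by simp [Finset.disjoint_left]; intro x h1 h2; omega),
    Finset.Ioc_union_Ioc_eq_Ioc h1 h2]

lemma finsum_if_le (g : ℤ → ℤ) (B p : ℤ) (h : ∀ l, l ≤ B → g l = 0) :
    (∑ᶠ l : ℤ, if l ≤ p then g l else 0) = ∑ l ∈ Finset.Ioc B p, g l := by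
  rw [finsum_eq_finset_sum_of_support_subset _ (s := Finset.Ioc B p)]
  · apply Finset.sum_congr rfl
    intro x hx
    simp only [Finset.mem_Ioc] at hx
    simp [hx.2]
  · intro x hx
    simp only [Function.mem_support] at hx
    simp only [Finset.coe_Ioc, Set.mem_Ioc]
    by_contra hc
    push_neg at hc
    rcases le_or_gt x p with h1 | h1
    · exact hx (by simpa [h1] using h x (by omega))
    · simp [not_le.2 h1] at hx

lemma sPat_eq (n : ℕ) (a A : ℤ → ℤ) (i j B : ℤ)
    (hB1 : ∀ l, l ≤ B → A l = a l) (hB2 : B ≤ (i + j) * n)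
    (hB3 : B ≤ i * n + j * ((n : ℤ) - 1)) :
    sPat n a A i j = (∑ l ∈ Finset.Ioc B (i * n + j * ((n : ℤ) - 1)), A l)
      - ∑ l ∈ Finset.Ioc B ((i + j) * n), a l := by
  set p := i * n + j * ((n : ℤ) - 1) with hp
  unfold sPat
  rw [finsum_if_le (fun l => A l - Tseq n a (i + j) l) B p (fun l hl => by
    have h1 := hB1 l hl
    have h2 : ¬ ((i + j) * (n : ℤ) < l) := by omega
    simp [Tseq, h2, h1])]
  rw [Icc_succ_left', Finset.sum_sub_distrib]
  have hTa : ∀ s : Finset ℤ, (∀ x ∈ s, x ≤ (i + j) * (n : ℤ)) →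
      ∑ l ∈ s, Tseq n a (i + j) l = ∑ l ∈ s, a l := fun s hs =>
    Finset.sum_congr rfl (fun x hx => by simp [Tseq, not_lt.2 (hs x hx)])
  have key : ∑ l ∈ Finset.Ioc B p, Tseq n a (i + j) l
      + ∑ l ∈ Finset.Ioc p ((i + j) * n), Tseq n a (i + j) l
      = ∑ l ∈ Finset.Ioc B ((i + j) * n), a l := by
    rcases le_total p ((i + j) * (n : ℤ)) with hc | hc
    · rw [sum_Ioc_split _ hB3 hc, hTa _ (fun x hx => (Finset.mem_Ioc.1 hx).2)]
    · have he : Finset.Ioc p ((i + j) * (n : ℤ)) = ∅ := Finset.Ioc_eq_empty (by omega)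
      rw [he, Finset.sum_empty, add_zero,
        ← sum_Ioc_split (Tseq n a (i + j)) hB2 hc,
        hTa _ (fun x hx => (Finset.mem_Ioc.1 hx).2)]
      have hz : ∑ l ∈ Finset.Ioc ((i + j) * (n : ℤ)) p, Tseq n a (i + j) l = 0 :=
        Finset.sum_eq_zero (fun x hx => by simp [Tseq, (Finset.mem_Ioc.1 hx).1])
      rw [hz, add_zero]
  rw [← hp]
  omega

lemma sum_window (n : ℕ) (a : ℤ → ℤ) (hper : ∀ i, a (i + n) = a i) (hn : 1 ≤ n) :
    ∀ c : ℤ, ∑ l ∈ Finset.Ioc c (c + n), a l = ∑ l ∈ Finset.Ioc (-1 : ℤ) ((-1 : ℤ) + n), a l := by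
  have shift : ∀ c : ℤ, ∑ l ∈ Finset.Ioc (c + 1) (c + 1 + n), a l
      = ∑ l ∈ Finset.Ioc c (c + n), a l := by
    intro c
    have h1 : ∑ l ∈ Finset.Ioc c (c + 1), a l + ∑ l ∈ Finset.Ioc (c + 1) (c + n), a l
        = ∑ l ∈ Finset.Ioc c (c + n), a l := sum_Ioc_split _ (by omega) (by omega)
    have h2 : ∑ l ∈ Finset.Ioc (c + 1) (c + n), a l
        + ∑ l ∈ Finset.Ioc (c + n) (c + 1 + n), a l
        = ∑ l ∈ Finset.Ioc (c + 1) (c + 1 + n), a l := sum_Ioc_split _ (by omega) (by omega)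
    have e1 : Finset.Ioc c (c + 1) = {c + 1} := by ext x; simp; omega
    have e2 : Finset.Ioc (c + n) (c + 1 + n) = {c + 1 + (n : ℤ)} := by ext x; simp; omega
    have e3 : a (c + 1 + (n : ℤ)) = a (c + 1) := hper (c + 1)
    rw [← h2, e2, Finset.sum_singleton, e3, ← h1, e1, Finset.sum_singleton]
    ring
  intro c
  induction c using Int.induction_on with
  | zero =>
    have h := shift (-1)
    rw [show (-1 : ℤ) + 1 = 0 from by ring] at h
    exact h
  | succ k ih => rw [shift, ih]
  | pred k ih =>
    have h := shift (-(k : ℤ) - 1)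
    rw [show -(k : ℤ) - 1 + 1 = -(k : ℤ) from by ring] at h
    rw [← h]
    exact ih

/-- For `A ∈ Π_λ`: `s_{i,j}(A) = s_{i-1,j+1}(A)` iff `A_{in+j(n-1)} = 0`, and
`s_{i,j}(A) = s_{i-1,j}(A)` iff `A_{in+(j-1)(n-1)} + ... + A_{in+j(n-1)} = k`. -/
theorem stmt1 (n : ℕ) (hn : 2 ≤ n) (a : ℤ → ℤ)
    (hper : ∀ i, a (i + n) = a i) (hpos : ∀ i, 0 ≤ a i)
    (A : ℤ → ℤ) (hA : MemPi n a A) (i j : ℤ) :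
    (sPat n a A i j = sPat n a A (i - 1) (j + 1) ↔ A (i * n + j * ((n : ℤ) - 1)) = 0) ∧
    (sPat n a A i j = sPat n a A (i - 1) j ↔
      (∑ l ∈ Finset.Icc (i * n + (j - 1) * ((n : ℤ) - 1)) (i * n + j * ((n : ℤ) - 1)), A l)
        = ∑ l ∈ Finset.Icc (0 : ℤ) ((n : ℤ) - 1), a l) := by
  obtain ⟨N, hN⟩ := hA.eventually_periodic
  have hn1 : (1 : ℤ) ≤ (n : ℤ) := by exact_mod_cast Nat.one_le_of_lt hn
  constructor
  · set p := i * n + j * ((n : ℤ) - 1) with hp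
    set B := min (min N ((i + j) * (n : ℤ))) (p - 1) with hB
    have hB1 : ∀ l, l ≤ B → A l = a l := fun l hl => hN l (by omega)
    have hBm : B ≤ (i + j) * (n : ℤ) := by omega
    have hBp1 : B ≤ p - 1 := by omega
    have s1 := sPat_eq n a A i j B hB1 hBm (by omega)
    rw [← hp] at s1
    have s2 := sPat_eq n a A (i - 1) (j + 1) B hB1
      (by rw [show ((i - 1) + (j + 1)) = i + j from by ring]; exact hBm)
      (by rw [show (i - 1) * (n : ℤ) + (j + 1) * ((n : ℤ) - 1) = p - 1 from by rw [hp]; ring]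
          omega)
    rw [show (i - 1) * (n : ℤ) + (j + 1) * ((n : ℤ) - 1) = p - 1 from by rw [hp]; ring,
      show ((i - 1) + (j + 1)) = i + j from by ring] at s2
    have hsplit : ∑ l ∈ Finset.Ioc B (p - 1), A l + ∑ l ∈ Finset.Ioc (p - 1) p, A l
        = ∑ l ∈ Finset.Ioc B p, A l := sum_Ioc_split _ hBp1 (by omega)
    have hsing : Finset.Ioc (p - 1) p = {p} := by ext x; simp; omega
    rw [hsing, Finset.sum_singleton] at hsplit
    rw [s1, s2]
    constructor <;> intro h <;> omega
  · set p := i * n + j * ((n : ℤ) - 1) with hp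
    set B := min (min N ((i + j - 1) * (n : ℤ))) (p - n) with hB
    have hrel : (i + j - 1) * (n : ℤ) = (i + j) * (n : ℤ) - n := by ring
    have hB1 : ∀ l, l ≤ B → A l = a l := fun l hl => hN l (by omega)
    have s1 := sPat_eq n a A i j B hB1 (by omega) (by omega)
    rw [← hp] at s1
    have s2 := sPat_eq n a A (i - 1) j B hB1
      (by rw [show ((i - 1) + j) = i + j - 1 from by ring]; omega)
      (by rw [show (i - 1) * (n : ℤ) + j * ((n : ℤ) - 1) = p - n from by rw [hp]; ring]; omega)
    rw [show (i - 1) * (n : ℤ) + j * ((n : ℤ) - 1) = p - n from by rw [hp]; ring,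
      show ((i - 1) + j) = i + j - 1 from by ring] at s2
    have hAsplit : ∑ l ∈ Finset.Ioc B (p - n), A l + ∑ l ∈ Finset.Ioc (p - n) p, A l
        = ∑ l ∈ Finset.Ioc B p, A l := sum_Ioc_split _ (by omega) (by omega)
    have hasplit : ∑ l ∈ Finset.Ioc B ((i + j - 1) * (n : ℤ)), a l
        + ∑ l ∈ Finset.Ioc ((i + j - 1) * (n : ℤ)) ((i + j) * (n : ℤ)), a l
        = ∑ l ∈ Finset.Ioc B ((i + j) * (n : ℤ)), a l :=
      sum_Ioc_split _ (by omega) (by omega)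
    have hk : ∑ l ∈ Finset.Ioc ((i + j - 1) * (n : ℤ)) ((i + j) * (n : ℤ)), a l
        = ∑ l ∈ Finset.Ioc (-1 : ℤ) ((-1 : ℤ) + n), a l := by
      have h := sum_window n a hper (by omega) ((i + j - 1) * (n : ℤ))
      rw [show (i + j - 1) * (n : ℤ) + n = (i + j) * (n : ℤ) from by ring] at h
      exact h
    have hkk : ∑ l ∈ Finset.Ioc (-1 : ℤ) ((-1 : ℤ) + n), a l
        = ∑ l ∈ Finset.Icc (0 : ℤ) ((n : ℤ) - 1), a l := by
      have e : Finset.Ioc (-1 : ℤ) ((-1 : ℤ) + n) = Finset.Icc (0 : ℤ) ((n : ℤ) - 1) := by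
        ext x; simp; omega
      rw [e]
    have hW : Finset.Icc (i * n + (j - 1) * ((n : ℤ) - 1)) p = Finset.Ioc (p - n) p := by
      rw [show i * (n : ℤ) + (j - 1) * ((n : ℤ) - 1) = (p - n) + 1 from by rw [hp]; ring,
        Icc_succ_left']
    rw [s1, s2, hW]
    constructor <;> intro h <;> omega
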